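/- Let G be the m×m Gram matrix of vectors x_1,...,x_m in C^n, i.e., G_{ij} = ⟨x_i, x_j⟩, and let k ≥ 1. Then the rank of the k-th entrywise (Schur) power G^{(k)} is at most binom(n+k-1, k). -/

import Mathlib

theorem schur_power_gram_rank_le (n m k : ℕ) (hk : 1 ≤ k)
    (x : Fin m → EuclideanSpace ℂ (Fin n))
    (G : Matrix (Fin m) (Fin m) ℂ)
    (hG : ∀ i j, G i j = (inner ℂ (x i) (x j) : ℂ)) :
    (Matrix.of fun i j => (G i j) ^ k).rank ≤ (n + k - 1).choose k := by
  classical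
  set φ : (Fin k → Fin n) → Sym (Fin n) k := fun f =>
    ⟨Multiset.map f Finset.univ.val, by simp⟩ with hφ
  set A : Matrix (Fin m) (Sym (Fin n) k) ℂ := fun i s =>
    (Multiset.map (fun l => (starRingEnd ℂ) (x i l)) s.1).prod with hA
  set B : Matrix (Sym (Fin n) k) (Fin m) ℂ := fun s j =>
    ∑ f ∈ Finset.univ.filter (fun f : Fin k → Fin n => φ f = s),
      ∏ t, x j (f t) with hB
  have key : (Matrix.of fun i j => (G i j) ^ k) = A * B := by
    ext i j
    rw [Matrix.mul_apply]
    simp only [Matrix.of_apply, hG, PiLp.inner_apply, RCLike.inner_apply']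
    have expand : (∑ l, (starRingEnd ℂ) (x i l) * x j l) ^ k
        = ∑ f : Fin k → Fin n, ∏ t, ((starRingEnd ℂ) (x i (f t)) * x j (f t)) := by
      rw [← Fin.prod_const k (∑ l, (starRingEnd ℂ) (x i l) * x j l)]
      rw [Finset.prod_univ_sum]
      rfl
    rw [expand]
    rw [← Finset.sum_fiberwise_of_maps_to (g := φ) (fun f _ => Finset.mem_univ (φ f))]
    refine Finset.sum_congr rfl fun s _ => ?_
    rw [hB, Finset.mul_sum]
    refine Finset.sum_congr rfl fun f hf => ?_
    have hfs : φ f = s := (Finset.mem_filter.mp hf).2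
    rw [← hfs]
    simp only [Finset.prod_mul_distrib]
    congr 1
    rw [hA]
    simp only [hφ, Multiset.map_map]
    rw [Finset.prod_eq_multiset_prod]
    rfl
  rw [key]
  calc (A * B).rank ≤ A.rank := Matrix.rank_mul_le_left A B
    _ ≤ Fintype.card (Sym (Fin n) k) := Matrix.rank_le_card_width A
    _ = (n + k - 1).choose k := by rw [Sym.card_sym_eq_choose, Fintype.card_fin]
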